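/- arXiv:math/0509344 — 3 statements merged into one kernel-verified Lean document; each statement's English description precedes it below -/
import Mathlib

section
/- Let X be a Banach space and let (x_n) be a bounded sequence in X. Then for every x in the unit sphere of X there exists a subsequence (x_{n_j}) of (x_n) such that liminf_{j,k→∞} ‖x − (x_{n_j} − x_{n_k})‖ ≥ 1. -/
open Filter Topology

/-- The modulus of convexity of a normed space. -/
noncomputable def modulusOfConvexity (X : Type*) [NormedAddCommGroup X] [NormedSpace ℝ X]
    (ε : ℝ) : ℝ :=
  sInf {d : ℝ | ∃ x y : X, ‖x‖ = 1 ∧ ‖y‖ = 1 ∧ ε ≤ ‖x - y‖ ∧ d = 1 - ‖x + y‖ / 2}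

/-- A normed space is uniformly convex if its modulus of convexity is positive on (0,2]. -/
def IsUnifConvex (X : Type*) [NormedAddCommGroup X] [NormedSpace ℝ X] : Prop :=
  ∀ ε : ℝ, 0 < ε → ε ≤ 2 → 0 < modulusOfConvexity X ε

theorem stmt0 {X : Type*} [NormedAddCommGroup X] [NormedSpace ℝ X] [CompleteSpace X]
    (f : ℕ → X) (hb : ∃ M : ℝ, ∀ n, ‖f n‖ ≤ M) (x : X) (hx : ‖x‖ = 1) :
    ∃ n : ℕ → ℕ, StrictMono n ∧
      1 ≤ Filter.liminf (fun p : ℕ × ℕ => ‖x - (f (n p.1) - f (n p.2))‖) Filter.atTop := by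
  obtain ⟨M, hM⟩ := hb
  have hx0 : x ≠ 0 := by intro h; rw [h, norm_zero] at hx; norm_num at hx
  obtain ⟨g, hg1, hgx⟩ := exists_dual_vector ℝ x (norm_ne_zero_iff.mpr hx0)
  -- the real sequence g (f n) is bounded, extract convergent subsequence
  have hbd : ∀ m, g (f m) ∈ Set.Icc (-M) M := by
    intro m
    have : |g (f m)| ≤ M := by
      calc |g (f m)| = ‖g (f m)‖ := rfl
        _ ≤ ‖g‖ * ‖f m‖ := g.le_opNorm _
        _ ≤ 1 * M := by
            apply mul_le_mul (le_of_eq hg1) (hM m) (norm_nonneg _) zero_le_one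
        _ = M := one_mul M
    exact abs_le.mp this
  obtain ⟨L, _, n, hmono, hconv⟩ := tendsto_subseq_of_bounded
    (Metric.isBounded_Icc (-M) M) hbd
  refine ⟨n, hmono, ?_⟩
  set u : ℕ × ℕ → ℝ := fun p => 1 - (g (f (n p.1)) - g (f (n p.2))) with hu
  have htu : Tendsto u atTop (𝓝 1) := by
    rw [← Filter.prod_atTop_atTop_eq]
    have h1 : Tendsto (fun p : ℕ × ℕ => g (f (n p.1))) (atTop ×ˢ atTop) (𝓝 L) :=
      hconv.comp tendsto_fst
    have h2 : Tendsto (fun p : ℕ × ℕ => g (f (n p.2))) (atTop ×ˢ atTop) (𝓝 L) :=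
      hconv.comp tendsto_snd
    have hc : Tendsto (fun _ : ℕ × ℕ => (1:ℝ)) (atTop ×ˢ atTop) (𝓝 1) :=
      tendsto_const_nhds
    have := hc.sub (h1.sub h2)
    simpa using this
  have hle : ∀ p : ℕ × ℕ, u p ≤ ‖x - (f (n p.1) - f (n p.2))‖ := by
    intro p
    have : u p = g (x - (f (n p.1) - f (n p.2))) := by
      simp only [hu, map_sub]
      have : g x = 1 := by rw [hgx, hx]; norm_num
      rw [this]
    rw [this]
    calc g (x - (f (n p.1) - f (n p.2))) ≤ ‖g (x - (f (n p.1) - f (n p.2)))‖ :=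
          le_abs_self _
      _ ≤ ‖g‖ * ‖x - (f (n p.1) - f (n p.2))‖ := g.le_opNorm _
      _ = ‖x - (f (n p.1) - f (n p.2))‖ := by rw [hg1, one_mul]
  have h1 : Filter.liminf u Filter.atTop = 1 := htu.liminf_eq
  rw [← h1]
  have hv : Filter.IsCoboundedUnder (· ≥ ·) (Filter.atTop : Filter (ℕ × ℕ))
      (fun p : ℕ × ℕ => ‖x - (f (n p.1) - f (n p.2))‖) := by
    refine Filter.IsBoundedUnder.isCoboundedUnder_ge (Filter.isBoundedUnder_of ⟨1 + (M + M), fun p => ?_⟩)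
    calc ‖x - (f (n p.1) - f (n p.2))‖ ≤ ‖x‖ + ‖f (n p.1) - f (n p.2)‖ := norm_sub_le _ _
      _ ≤ 1 + (‖f (n p.1)‖ + ‖f (n p.2)‖) := by rw [hx]; gcongr; exact norm_sub_le _ _
      _ ≤ 1 + (M + M) := by gcongr <;> exact hM _
  exact Filter.liminf_le_liminf (Filter.Eventually.of_forall hle) htu.isBoundedUnder_ge hv
end

section
/- Let X be a uniformly convex Banach space, 0 < ε ≤ 2, and let δ > 0 satisfy δ ≤ δ_X(ε − δ). If x ∈ S_X, x' ∈ X, and T : X → Y is a linear contraction with |1 − ‖x'‖| < δ, ‖Tx‖ = 1, and ‖Tx − Tx'‖ < δ, then ‖x − x'‖ < ε. -/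
open Filter

lemma modulus_bddBelow (X : Type*) [NormedAddCommGroup X] [NormedSpace ℝ X] (ε : ℝ) :
    BddBelow {d : ℝ | ∃ x y : X, ‖x‖ = 1 ∧ ‖y‖ = 1 ∧ ε ≤ ‖x - y‖ ∧ d = 1 - ‖x + y‖ / 2} := by
  refine ⟨0, fun d hd => ?_⟩
  obtain ⟨a, b, ha, hb, _, hd⟩ := hd
  have : ‖a + b‖ ≤ 2 := by
    calc ‖a + b‖ ≤ ‖a‖ + ‖b‖ := norm_add_le a b
    _ = 2 := by rw [ha, hb]; norm_num
  rw [hd]; linarith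

lemma modulus_le_one (X : Type*) [NormedAddCommGroup X] [NormedSpace ℝ X] (ε : ℝ) :
    modulusOfConvexity X ε ≤ 1 := by
  unfold modulusOfConvexity
  set S := {d : ℝ | ∃ x y : X, ‖x‖ = 1 ∧ ‖y‖ = 1 ∧ ε ≤ ‖x - y‖ ∧ d = 1 - ‖x + y‖ / 2}
  rcases S.eq_empty_or_nonempty with h | h
  · rw [h, Real.sInf_empty]; norm_num
  · obtain ⟨d, hd⟩ := h
    refine csInf_le_of_le (modulus_bddBelow X ε) hd ?_
    obtain ⟨a, b, _, _, _, hd⟩ := hd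
    have : 0 ≤ ‖a + b‖ := norm_nonneg _
    rw [hd]; linarith

theorem stmt9 {X : Type*} [NormedAddCommGroup X] [NormedSpace ℝ X] [CompleteSpace X]
    {Y : Type*} [NormedAddCommGroup Y] [NormedSpace ℝ Y] [CompleteSpace Y]
    (hX : IsUnifConvex X) (ε δ : ℝ) (hε0 : 0 < ε) (hε2 : ε ≤ 2)
    (hδ0 : 0 < δ) (hδ : δ ≤ modulusOfConvexity X (ε - δ))
    (x x' : X) (T : X →L[ℝ] Y) (hx : ‖x‖ = 1) (hT : ‖T‖ ≤ 1)
    (h1 : |1 - ‖x'‖| < δ) (h2 : ‖T x‖ = 1) (h3 : ‖T x - T x'‖ < δ) :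
    ‖x - x'‖ < ε := by
  by_contra hcon
  push_neg at hcon
  have hδ1 : δ ≤ 1 := hδ.trans (modulus_le_one X _)
  have hr : (0:ℝ) < ‖x'‖ := by
    rcases abs_lt.mp h1 with ⟨hl, hu⟩
    linarith
  set c : ℝ := ‖x'‖⁻¹ with hc
  set x'' : X := c • x' with hx''
  have hnx'' : ‖x''‖ = 1 := by
    rw [hx'', norm_smul, norm_inv, Real.norm_eq_abs, abs_of_pos hr,
      inv_mul_cancel₀ hr.ne']
  have hdiff : ‖x' - x''‖ = |1 - ‖x'‖| := by
    have : x' - x'' = (1 - c) • x' := by rw [hx'', sub_smul, one_smul]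
    rw [this, norm_smul, Real.norm_eq_abs]
    rw [hc]
    rw [show (1 - ‖x'‖⁻¹) = (‖x'‖ - 1) / ‖x'‖ by field_simp]
    rw [abs_div, abs_of_pos hr, div_mul_cancel₀ _ hr.ne', abs_sub_comm]
  have hdiffδ : ‖x' - x''‖ < δ := by rw [hdiff]; exact h1
  have hxx'' : ε - δ ≤ ‖x - x''‖ := by
    have h4 : ‖x - x'‖ ≤ ‖x - x''‖ + ‖x' - x''‖ := by
      have h5 := norm_sub_le (x - x'') (x' - x'')
      have : (x - x'') - (x' - x'') = x - x' := by abel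
      rwa [this] at h5
    linarith
  -- modulus bound
  have hmem : (1 - ‖x + x''‖ / 2) ∈
      {d : ℝ | ∃ a b : X, ‖a‖ = 1 ∧ ‖b‖ = 1 ∧ ε - δ ≤ ‖a - b‖ ∧ d = 1 - ‖a + b‖ / 2} :=
    ⟨x, x'', hx, hnx'', hxx'', rfl⟩
  have hmod : modulusOfConvexity X (ε - δ) ≤ 1 - ‖x + x''‖ / 2 :=
    csInf_le (modulus_bddBelow X _) hmem
  have hsum : ‖x + x''‖ ≤ 2 - 2 * δ := by linarith
  -- T side
  have hT1 : ‖T (x' - x'')‖ ≤ ‖x' - x''‖ := by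
    calc ‖T (x' - x'')‖ ≤ ‖T‖ * ‖x' - x''‖ := T.le_opNorm _
    _ ≤ 1 * ‖x' - x''‖ := by
        exact mul_le_mul_of_nonneg_right hT (norm_nonneg _)
    _ = ‖x' - x''‖ := one_mul _
  have hTx'' : ‖T x - T x''‖ < 2 * δ := by
    have : T x - T x'' = (T x - T x') + T (x' - x'') := by
      rw [map_sub]; abel
    rw [this]
    calc ‖(T x - T x') + T (x' - x'')‖ ≤ ‖T x - T x'‖ + ‖T (x' - x'')‖ := norm_add_le _ _
    _ < δ + δ := by have := hT1.trans_lt hdiffδ; linarith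
    _ = 2 * δ := by ring
  have hTsum : 2 - 2 * δ < ‖T (x + x'')‖ := by
    have heq : T (x + x'') = (2:ℝ) • T x - (T x - T x'') := by
      rw [map_add]; rw [two_smul]; abel
    have h5 : ‖(2:ℝ) • T x‖ - ‖T x - T x''‖ ≤ ‖(2:ℝ) • T x - (T x - T x'')‖ :=
      norm_sub_norm_le _ _ |>.trans (le_abs_self _) |> fun _ => by
        have := norm_sub_norm_le ((2:ℝ) • T x) (T x - T x'')
        linarith [this]
    have h6 : ‖(2:ℝ) • T x‖ = 2 := by
      rw [norm_smul, Real.norm_eq_abs, h2]; norm_num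
    rw [heq]
    have := norm_sub_norm_le ((2:ℝ) • T x) (T x - T x'')
    rw [h6] at this
    linarith
  have hTsum2 : ‖T (x + x'')‖ ≤ ‖x + x''‖ := by
    calc ‖T (x + x'')‖ ≤ ‖T‖ * ‖x + x''‖ := T.le_opNorm _
    _ ≤ 1 * ‖x + x''‖ := mul_le_mul_of_nonneg_right hT (norm_nonneg _)
    _ = ‖x + x''‖ := one_mul _
  linarith
end

section
/- Let X be a uniformly convex Banach space, 0 < ε ≤ 2, and let δ > 0 satisfy δ ≤ (1/2)·δ_X(ε − δ). If x ∈ S_X, x' ∈ X, and T : X → Y is a linear contraction such that |1 − ‖x'‖| < δ, ‖Tx‖ > 1 − δ, and ‖Tx − Tx'‖ < δ, then ‖x − x'‖ < ε. -/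
open Filter

theorem stmt10 {X : Type*} [NormedAddCommGroup X] [NormedSpace ℝ X] [CompleteSpace X]
    {Y : Type*} [NormedAddCommGroup Y] [NormedSpace ℝ Y] [CompleteSpace Y]
    (hX : IsUnifConvex X) (ε δ : ℝ) (hε0 : 0 < ε) (hε2 : ε ≤ 2)
    (hδ0 : 0 < δ) (hδ : δ ≤ modulusOfConvexity X (ε - δ) / 2)
    (x x' : X) (T : X →L[ℝ] Y) (hx : ‖x‖ = 1) (hT : ‖T‖ ≤ 1)
    (h1 : |1 - ‖x'‖| < δ) (h2 : 1 - δ < ‖T x‖) (h3 : ‖T x - T x'‖ < δ) :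
    ‖x - x'‖ < ε := by
  set S : Set ℝ := {d : ℝ | ∃ u y : X, ‖u‖ = 1 ∧ ‖y‖ = 1 ∧ ε - δ ≤ ‖u - y‖ ∧ d = 1 - ‖u + y‖ / 2}
    with hS
  have hbdd : BddBelow S := by
    refine ⟨0, ?_⟩
    rintro d ⟨u, y, hu, hy, -, rfl⟩
    have : ‖u + y‖ ≤ 2 := by
      calc ‖u + y‖ ≤ ‖u‖ + ‖y‖ := norm_add_le u y
        _ = 2 := by rw [hu, hy]; norm_num
    linarith
  have hmem1 : (1 : ℝ) ∈ S := by
    refine ⟨x, -x, hx, by simp [hx], ?_, by simp⟩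
    rw [sub_neg_eq_add]
    have : ‖x + x‖ = 2 := by
      have : x + x = (2 : ℝ) • x := by module
      rw [this, norm_smul, hx]; norm_num
    linarith
  have hle1 : modulusOfConvexity X (ε - δ) ≤ 1 := csInf_le hbdd hmem1
  have hδhalf : δ ≤ 1 / 2 := by linarith
  have hx'pos : 0 < ‖x'‖ := by
    have := abs_lt.1 h1
    linarith
  by_contra hcon
  push_neg at hcon
  set v : X := ‖x'‖⁻¹ • x' with hv
  have hvnorm : ‖v‖ = 1 := by
    rw [hv, norm_smul, norm_inv, norm_norm, inv_mul_cancel₀ hx'pos.ne']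
  have hx'v : ‖x' - v‖ < δ := by
    have : x' - v = (1 - ‖x'‖⁻¹) • x' := by rw [hv]; module
    rw [this, norm_smul, Real.norm_eq_abs]
    have : |1 - ‖x'‖⁻¹| * ‖x'‖ = |(1 - ‖x'‖⁻¹) * ‖x'‖| := by
      rw [abs_mul, abs_of_pos hx'pos]
    rw [this]
    have : (1 - ‖x'‖⁻¹) * ‖x'‖ = ‖x'‖ - 1 := by
      field_simp
    rw [this, abs_sub_comm]
    exact h1
  have hxv : ε - δ ≤ ‖x - v‖ := by
    have : ‖x - x'‖ ≤ ‖x - v‖ + ‖x' - v‖ := by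
      have := norm_add_le (x - v) (v - x')
      simp only [sub_add_sub_cancel] at this
      rw [norm_sub_rev x' v]
      linarith [this]
    linarith
  have hmem2 : 1 - ‖x + v‖ / 2 ∈ S := ⟨x, v, hx, hvnorm, hxv, rfl⟩
  have hle2 : modulusOfConvexity X (ε - δ) ≤ 1 - ‖x + v‖ / 2 := csInf_le hbdd hmem2
  have hupper : ‖x + v‖ ≤ 2 - 4 * δ := by linarith
  -- lower bound via T
  have hTxv : ‖T (x + v)‖ ≤ ‖x + v‖ := by
    calc ‖T (x + v)‖ ≤ ‖T‖ * ‖x + v‖ := T.le_opNorm _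
      _ ≤ 1 * ‖x + v‖ := by
          apply mul_le_mul_of_nonneg_right hT (norm_nonneg _)
      _ = ‖x + v‖ := one_mul _
  have hTx'v : ‖T x' - T v‖ < δ := by
    calc ‖T x' - T v‖ = ‖T (x' - v)‖ := by rw [map_sub]
      _ ≤ ‖T‖ * ‖x' - v‖ := T.le_opNorm _
      _ ≤ 1 * ‖x' - v‖ := mul_le_mul_of_nonneg_right hT (norm_nonneg _)
      _ < δ := by rw [one_mul]; exact hx'v
  have hTsum : 2 - 3 * δ < ‖T x + T x'‖ := by
    have : T x + T x' = (2 : ℝ) • T x - (T x - T x') := by module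
    rw [this]
    have h2Tx : ‖(2:ℝ) • T x‖ = 2 * ‖T x‖ := by
      rw [norm_smul]; norm_num
    have := norm_sub_norm_le ((2:ℝ) • T x) (T x - T x')
    rw [h2Tx] at this
    linarith
  have hlower : 2 - 4 * δ < ‖T (x + v)‖ := by
    have heq : T (x + v) = (T x + T x') - (T x' - T v) := by
      rw [map_add]; abel
    rw [heq]
    have := norm_sub_norm_le (T x + T x') (T x' - T v)
    have h' : ‖T x + T x'‖ - ‖T x' - T v‖ ≤ ‖T x + T x' - (T x' - T v)‖ := this
    linarith
  linarith
end
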